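/- Let C be a k-dimensional linear code of length n over F_q, let h be the dimension of the hull H(C) = C ∩ C^⊥, and let r = k − h. Then C has a generator matrix G₀ such that G₀G₀ᵀ is the block matrix with an h×h zero block in the upper left, zero off-diagonal blocks, and an invertible r×r matrix P in the lower right. -/

import Mathlib

/-- The Euclidean dual of a linear code `C ⊆ F^n`. -/
def dualCode {F : Type*} [Field F] {n : ℕ} (C : Submodule F (Fin n → F)) :
    Submodule F (Fin n → F) where
  carrier := {x | ∀ c ∈ C, ∑ i, x i * c i = 0}
  add_mem' := by
    intro x y hx hy c hc
    simp [add_mul, Finset.sum_add_distrib, hx c hc, hy c hc]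
  zero_mem' := by
    intro c hc
    simp
  smul_mem' := by
    intro a x hx c hc
    simp [smul_eq_mul, mul_assoc, ← Finset.mul_sum, hx c hc]

set_option maxHeartbeats 1000000 in
set_option synthInstance.maxHeartbeats 400000 in
/-- A `k`-dimensional code `C` with hull of dimension `h` has a generator
matrix `G₀` (a matrix whose rows form a basis of `C`) such that
`G₀ * G₀ᵀ` is block diagonal with an `h × h` zero block in the upper left and
an invertible `r × r` block `P` in the lower right, where `r = k - h`. -/
theorem exists_generator_matrix_hull_block_form {F : Type*} [Field F]
    {n k h r : ℕ} (C : Submodule F (Fin n → F))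
    (hk : Module.finrank F C = k)
    (hh : Module.finrank F ↥(C ⊓ dualCode C) = h)
    (hr : r = k - h) (hkhr : k = h + r) :
    ∃ (G₀ : Matrix (Fin k) (Fin n) F) (P : Matrix (Fin r) (Fin r) F),
      LinearIndependent F (fun i : Fin k => G₀ i) ∧
      Submodule.span F (Set.range fun i : Fin k => G₀ i) = C ∧
      IsUnit P ∧
      G₀ * G₀.transpose =
        Matrix.submatrix
          (Matrix.fromBlocks (0 : Matrix (Fin h) (Fin h) F) 0 0 P)
          ((finCongr hkhr).trans finSumFinEquiv.symm)
          ((finCongr hkhr).trans finSumFinEquiv.symm) := by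
  classical
  set H : Submodule F (Fin n → F) := C ⊓ dualCode C with hHdef
  have hHC : H ≤ C := inf_le_left
  let Hc : Submodule F C := Submodule.comap C.subtype H
  obtain ⟨W, hW⟩ := Submodule.exists_isCompl Hc
  haveI hfd : FiniteDimensional F C := inferInstance
  haveI : Module.Free F Hc := Module.Free.of_divisionRing F Hc
  haveI : Module.Free F W := Module.Free.of_divisionRing F W
  haveI : Module.Finite F Hc := FiniteDimensional.finiteDimensional_submodule Hc
  haveI : Module.Finite F W := FiniteDimensional.finiteDimensional_submodule W
  have hHcfin : Module.finrank F Hc = h := by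
    rw [← hh]
    exact LinearEquiv.finrank_eq (Submodule.comapSubtypeEquivOfLe hHC)
  have hWfin : Module.finrank F W = r := by
    have := Submodule.finrank_add_eq_of_isCompl hW
    rw [hHcfin, hk, hkhr] at this
    omega
  let bH : Module.Basis (Fin h) F Hc := Module.finBasisOfFinrankEq F Hc hHcfin
  let bW : Module.Basis (Fin r) F W := Module.finBasisOfFinrankEq F W hWfin
  let b : Module.Basis (Fin h ⊕ Fin r) F C :=
    (bH.prod bW).map (Submodule.prodEquivOfIsCompl Hc W hW)
  -- the rows in the ambient space
  let v : Fin h ⊕ Fin r → (Fin n → F) := fun s => (b s : Fin n → F)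
  have hbinl : ∀ a : Fin h, b (Sum.inl a) = ((bH a : C)) := by
    intro a
    rw [show b (Sum.inl a)
        = Submodule.prodEquivOfIsCompl Hc W hW ((bH.prod bW) (Sum.inl a)) from
      Module.Basis.map_apply _ _ _]
    rw [show (bH.prod bW) (Sum.inl a) = (bH a, (0 : W)) from
      Prod.ext (Module.Basis.prod_apply_inl_fst _ _ _) (Module.Basis.prod_apply_inl_snd _ _ _)]
    rw [Submodule.coe_prodEquivOfIsCompl']
    simp
  have hbinr : ∀ a : Fin r, b (Sum.inr a) = ((bW a : C)) := by
    intro a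
    rw [show b (Sum.inr a)
        = Submodule.prodEquivOfIsCompl Hc W hW ((bH.prod bW) (Sum.inr a)) from
      Module.Basis.map_apply _ _ _]
    rw [show (bH.prod bW) (Sum.inr a) = ((0 : Hc), bW a) from
      Prod.ext (Module.Basis.prod_apply_inr_fst _ _ _) (Module.Basis.prod_apply_inr_snd _ _ _)]
    rw [Submodule.coe_prodEquivOfIsCompl']
    simp
  have hvH : ∀ a : Fin h, v (Sum.inl a) ∈ H := by
    intro a
    have h1 : C.subtype ((bH a : C)) ∈ H := Submodule.mem_comap.mp (bH a).2
    show ((b (Sum.inl a) : C) : Fin n → F) ∈ H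
    rw [hbinl]
    exact h1
  have hvC : ∀ s, v s ∈ C := fun s => (b s).2
  -- pairing facts
  have hpair0 : ∀ x ∈ dualCode C, ∀ c ∈ C, ∑ t, x t * c t = 0 := fun x hx c hc => hx c hc
  have hpair0' : ∀ x ∈ dualCode C, ∀ c ∈ C, ∑ t, c t * x t = 0 := by
    intro x hx c hc
    simpa [mul_comm] using hpair0 x hx c hc
  let e : Fin k ≃ (Fin h ⊕ Fin r) := (finCongr hkhr).trans finSumFinEquiv.symm
  let G₀ : Matrix (Fin k) (Fin n) F := Matrix.of (fun i => v (e i))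
  let P : Matrix (Fin r) (Fin r) F :=
    Matrix.of (fun a c => ∑ t, v (Sum.inr a) t * v (Sum.inr c) t)
  -- linear independence
  have hli : LinearIndependent F (fun i : Fin k => G₀ i) := by
    have h1 : LinearIndependent F v :=
      b.linearIndependent.map' C.subtype (Submodule.ker_subtype C)
    exact h1.comp e e.injective
  -- span
  have hspanv : Submodule.span F (Set.range v) = C := by
    have hrange : Set.range v = C.subtype '' (Set.range b) := by
      rw [← Set.range_comp]; rfl
    rw [hrange, Submodule.span_image, b.span_eq, Submodule.map_subtype_top]
  have hspan : Submodule.span F (Set.range fun i : Fin k => G₀ i) = C := by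
    have hrange : (Set.range fun i : Fin k => G₀ i) = Set.range v := by
      have hcomp : (fun i : Fin k => G₀ i) = v ∘ e := rfl
      rw [hcomp, Set.range_comp, e.surjective.range_eq, Set.image_univ]
    rw [hrange, hspanv]
  -- invertibility of P
  have hPunit : IsUnit P := by
    rw [Matrix.isUnit_iff_isUnit_det, isUnit_iff_ne_zero]
    rw [← Matrix.separatingLeft_iff_det_ne_zero, Matrix.separatingLeft_def]
    intro vv hvv
    -- the element x = ∑ vv a • b (inr a)
    set x : C := ∑ a, vv a • b (Sum.inr a) with hxdef
    have hxW : x ∈ W := by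
      apply Submodule.sum_mem
      intro a _
      apply Submodule.smul_mem
      show b (Sum.inr a) ∈ W
      rw [hbinr a]
      exact (bW a).2
    have hxcoe : (x : Fin n → F) = ∑ a, vv a • v (Sum.inr a) := by
      rw [hxdef]
      push_cast
      rfl
    -- pairing of x with each basis vector of C vanishes
    have hxpair : ∀ s, ∑ t, (x : Fin n → F) t * v s t = 0 := by
      intro s
      rcases s with a | c
      · -- pairing with hull element
        exact hpair0' _ (hvH a).2 _ x.2
      · -- pairing with W-part basis element: use hvv with the unit vector
        have hv1 := hvv (Pi.single c 1)
        rw [Matrix.mulVec_single] at hv1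
        have hv2 : ∑ a, vv a * P a c = 0 := by
          simpa [dotProduct] using hv1
        rw [hxcoe]
        have hsum : ∑ t, (∑ a, vv a • v (Sum.inr a)) t * v (Sum.inr c) t
            = ∑ a, vv a * P a c := by
          simp only [Finset.sum_apply, Pi.smul_apply, smul_eq_mul, Finset.sum_mul]
          rw [Finset.sum_comm]
          refine Finset.sum_congr rfl fun a _ => ?_
          show _ = vv a * ∑ t, v (Sum.inr a) t * v (Sum.inr c) t
          rw [Finset.mul_sum]
          exact Finset.sum_congr rfl fun t _ => by ring
        rw [hsum, hv2]
    -- x pairs to zero with everything in C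
    have hxdual : (x : Fin n → F) ∈ dualCode C := by
      intro c hc
      let φ : (Fin n → F) →ₗ[F] F :=
        { toFun := fun c => ∑ t, (x : Fin n → F) t * c t
          map_add' := by
            intro y z
            simp [mul_add, Finset.sum_add_distrib]
          map_smul' := by
            intro a y
            simp [Finset.mul_sum, mul_left_comm] }
      have hCle : C ≤ LinearMap.ker φ := by
        rw [← hspanv, Submodule.span_le]
        rintro _ ⟨s, rfl⟩
        exact hxpair s
      exact hCle hc
    -- hence x ∈ Hc, and x ∈ W, so x = 0
    have hxHc : x ∈ Hc := by
      have hxH : (x : Fin n → F) ∈ H := Submodule.mem_inf.mpr ⟨x.2, hxdual⟩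
      exact Submodule.mem_comap.mpr hxH
    have hx0 : x = 0 := by
      have hbot := hW.inf_eq_bot
      have hmem : x ∈ Hc ⊓ W := Submodule.mem_inf.mpr ⟨hxHc, hxW⟩
      rw [hbot] at hmem
      simpa using hmem
    -- conclude vv = 0 from linear independence
    have hliW : LinearIndependent F (fun a : Fin r => b (Sum.inr a)) :=
      b.linearIndependent.comp Sum.inr Sum.inr_injective
    funext a
    exact Fintype.linearIndependent_iff.mp hliW vv (by rw [← hxdef, hx0]) a
  refine ⟨G₀, P, hli, hspan, hPunit, ?_⟩
  -- Gram matrix computation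
  have key : ∀ s t : Fin h ⊕ Fin r,
      ∑ u, v s u * v t u = Matrix.fromBlocks (0 : Matrix (Fin h) (Fin h) F) 0 0 P s t := by
    rintro (a | a) (c | c)
    · rw [Matrix.fromBlocks_apply₁₁, Matrix.zero_apply]
      exact hpair0 _ (hvH a).2 _ (hvC _)
    · rw [Matrix.fromBlocks_apply₁₂, Matrix.zero_apply]
      exact hpair0 _ (hvH a).2 _ (hvC _)
    · rw [Matrix.fromBlocks_apply₂₁, Matrix.zero_apply]
      exact hpair0' _ (hvH c).2 _ (hvC _)
    · rw [Matrix.fromBlocks_apply₂₂]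
      rfl
  ext i j
  rw [Matrix.mul_apply, Matrix.submatrix_apply]
  simp only [Matrix.transpose_apply]
  exact key (e i) (e j)
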